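/- Let H be a complex Hilbert space, let u be a unitary operator on H, let b be a bounded linear operator on H, and let n be a positive integer. Suppose that uⁱ b u⁻ⁱ b* = 0 for all i = 1, …, n (where b* denotes the adjoint of b). Then ‖∑_{i=1}^n uⁱ b u⁻ⁱ‖² ≤ n ‖b‖², where ‖·‖ is the operator norm. -/

import Mathlib

open scoped BigOperators

/-- if `u` is a unitary on a complex Hilbert space, `b` a bounded operator
and `uⁱ b u⁻ⁱ b* = 0` for `i = 1, …, n`, then `‖∑_{i=1}^n uⁱ b u⁻ⁱ‖² ≤ n‖b‖²`.
(Here `u⁻ⁱ = (u*)ⁱ` since `u` is unitary.) -/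
theorem statement16 {H : Type*} [NormedAddCommGroup H] [InnerProductSpace ℂ H]
    [CompleteSpace H] (u b : H →L[ℂ] H) (hu : u ∈ unitary (H →L[ℂ] H))
    (n : ℕ) (hn : 0 < n)
    (h : ∀ i ∈ Finset.Icc 1 n, u ^ i * b * (star u) ^ i * star b = 0) :
    ‖∑ i ∈ Finset.Icc 1 n, u ^ i * b * (star u) ^ i‖ ^ 2 ≤ (n : ℝ) * ‖b‖ ^ 2 := by
  have h1 : star u * u = 1 := hu.1
  have h2 : u * star u = 1 := hu.2
  have hc : Commute (star u) u := by
    unfold Commute SemiconjBy; rw [h1, h2]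
  have hsu : ∀ k : ℕ, (star u) ^ k * u ^ k = 1 := by
    intro k; rw [← hc.mul_pow, h1, one_pow]
  have hus : ∀ k : ℕ, u ^ k * (star u) ^ k = 1 := by
    intro k; rw [← hc.symm.mul_pow, h2, one_pow]
  set A : ℕ → (H →L[ℂ] H) := fun i => u ^ i * b * (star u) ^ i with hA
  -- basic consequences of the hypothesis
  have hb0 : ∀ k ∈ Finset.Icc 1 n, b * (star u) ^ k * star b = 0 := by
    intro k hk
    have h' := h k hk
    have : (star u) ^ k * (u ^ k * b * (star u) ^ k * star b) = 0 := by
      rw [h', mul_zero]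
    calc b * (star u) ^ k * star b
        = (star u) ^ k * u ^ k * b * (star u) ^ k * star b := by rw [hsu, one_mul]
      _ = (star u) ^ k * (u ^ k * b * (star u) ^ k * star b) := by
          simp only [mul_assoc]
      _ = 0 := this
  have hb1 : ∀ k ∈ Finset.Icc 1 n, b * u ^ k * star b = 0 := by
    intro k hk
    have := congrArg star (hb0 k hk)
    simpa [star_mul, star_pow, mul_assoc] using this
  -- unitaries have norm ≤ 1
  have hnorm1 : ∀ k : ℕ, ‖u ^ k‖ ≤ 1 := by
    intro k
    have hsq : ‖u ^ k‖ * ‖u ^ k‖ = ‖star (u ^ k) * u ^ k‖ :=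
      (CStarRing.norm_star_mul_self).symm
    have : star (u ^ k) * u ^ k = 1 := by rw [star_pow]; exact hsu k
    rw [this] at hsq
    have hone : ‖(1 : H →L[ℂ] H)‖ ≤ 1 := ContinuousLinearMap.norm_id_le
    nlinarith [norm_nonneg (u ^ k)]
  have hnorm2 : ∀ k : ℕ, ‖(star u) ^ k‖ ≤ 1 := by
    intro k
    have := hnorm1 k
    calc ‖(star u) ^ k‖ = ‖star (u ^ k)‖ := by rw [star_pow]
      _ = ‖u ^ k‖ := norm_star _
      _ ≤ 1 := this
  have hAle : ∀ i : ℕ, ‖A i‖ ≤ ‖b‖ := by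
    intro i
    calc ‖A i‖ ≤ ‖u ^ i * b‖ * ‖(star u) ^ i‖ := norm_mul_le _ _
      _ ≤ ‖u ^ i‖ * ‖b‖ * ‖(star u) ^ i‖ := by
          gcongr; exact norm_mul_le _ _
      _ ≤ 1 * ‖b‖ * 1 := by
          gcongr <;> first | positivity | exact hnorm1 i | exact hnorm2 i
      _ = ‖b‖ := by ring
  -- cross terms vanish
  have cross : ∀ i ∈ Finset.Icc 1 n, ∀ j ∈ Finset.Icc 1 n, i ≠ j →
      A i * star (A j) = 0 := by
    intro i hi j hj hij
    simp only [Finset.mem_Icc] at hi hj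
    have hstarA : star (A j) = u ^ j * star b * (star u) ^ j := by
      simp [hA, star_mul, star_pow, mul_assoc]
    rw [hA, hstarA]
    rcases lt_or_gt_of_ne hij with hlt | hgt
    · -- i < j
      have key : (star u) ^ i * u ^ j = u ^ (j - i) := by
        have : u ^ j = u ^ i * u ^ (j - i) := by
          rw [← pow_add]; congr 1; omega
        rw [this, ← mul_assoc, hsu, one_mul]
      have hmem : j - i ∈ Finset.Icc 1 n := by simp [Finset.mem_Icc]; omega
      calc u ^ i * b * (star u) ^ i * (u ^ j * star b * (star u) ^ j)
          = u ^ i * (b * ((star u) ^ i * u ^ j) * star b) * (star u) ^ j := by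
            simp only [mul_assoc]
        _ = u ^ i * (b * u ^ (j - i) * star b) * (star u) ^ j := by rw [key]
        _ = 0 := by rw [hb1 _ hmem, mul_zero, zero_mul]
    · -- i > j
      have key : (star u) ^ i * u ^ j = (star u) ^ (i - j) := by
        have : (star u) ^ i = (star u) ^ (i - j) * (star u) ^ j := by
          rw [← pow_add]; congr 1; omega
        rw [this, mul_assoc, hsu, mul_one]
      have hmem : i - j ∈ Finset.Icc 1 n := by simp [Finset.mem_Icc]; omega
      calc u ^ i * b * (star u) ^ i * (u ^ j * star b * (star u) ^ j)
          = u ^ i * (b * ((star u) ^ i * u ^ j) * star b) * (star u) ^ j := by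
            simp only [mul_assoc]
        _ = u ^ i * (b * (star u) ^ (i - j) * star b) * (star u) ^ j := by rw [key]
        _ = 0 := by rw [hb0 _ hmem, mul_zero, zero_mul]
  set S := ∑ i ∈ Finset.Icc 1 n, A i with hS
  have hSS : S * star S = ∑ i ∈ Finset.Icc 1 n, A i * star (A i) := by
    rw [hS, star_sum, Finset.sum_mul_sum]
    refine Finset.sum_congr rfl fun i hi => ?_
    rw [Finset.sum_eq_single i (fun j hj hji => cross i hi j hj (Ne.symm hji)) (by
      intro hcon; exact absurd hi hcon)]
  have hsq : ‖S‖ ^ 2 = ‖S * star S‖ := by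
    rw [CStarRing.norm_self_mul_star, sq]
  calc ‖S‖ ^ 2 = ‖∑ i ∈ Finset.Icc 1 n, A i * star (A i)‖ := by rw [hsq, hSS]
    _ ≤ ∑ i ∈ Finset.Icc 1 n, ‖A i * star (A i)‖ := norm_sum_le _ _
    _ ≤ ∑ _i ∈ Finset.Icc 1 n, ‖b‖ ^ 2 := by
        refine Finset.sum_le_sum fun i _ => ?_
        calc ‖A i * star (A i)‖ ≤ ‖A i‖ * ‖star (A i)‖ := norm_mul_le _ _
          _ = ‖A i‖ * ‖A i‖ := by rw [norm_star]
          _ ≤ ‖b‖ * ‖b‖ := by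
              have := hAle i
              nlinarith [norm_nonneg (A i)]
          _ = ‖b‖ ^ 2 := (sq ‖b‖).symm
    _ = (n : ℝ) * ‖b‖ ^ 2 := by
        rw [Finset.sum_const, Nat.card_Icc]
        simp [nsmul_eq_mul]
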